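/- Elliptical potential lemma without clipping: let x_1, …, x_T ∈ ℝ^d with ‖x_i‖ ≤ L for all i, let Λ_0 ∈ ℝ^{d×d} be symmetric positive definite with smallest eigenvalue λ_min(Λ_0) ≥ max(1, L²), and set Λ_t = Λ_0 + Σ_{i=1}^{t} x_i x_i^⊤. Then Σ_{i=1}^{T} ‖x_i‖²_{Λ_{i-1}^{-1}} ≤ 2·log( det(Λ_T)/det(Λ_0) ). -/

import Mathlib

open Finset Matrix

lemma aux_log_ineq (u : ℝ) (h0 : 0 ≤ u) (h1 : u ≤ 1) : u ≤ 2 * Real.log (1 + u) := by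
  have h2 : (0:ℝ) < 1 - u/2 := by linarith
  have h3 : 1 - u/2 ≤ Real.exp (-(u/2)) := by
    have := Real.add_one_le_exp (-(u/2)); linarith
  have he : 0 < Real.exp (u/2) := Real.exp_pos _
  have h5 : (1 - u/2) * Real.exp (u/2) ≤ 1 := by
    rw [Real.exp_neg] at h3
    have := mul_le_mul_of_nonneg_right h3 he.le
    rwa [inv_mul_cancel₀ he.ne'] at this
  have h4 : Real.exp (u/2) ≤ 1 + u := by nlinarith
  have h6 : u/2 ≤ Real.log (1+u) := (Real.le_log_iff_exp_le (by linarith)).2 h4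
  linarith

lemma vecMulVec_psd {d : ℕ} (v : Fin d → ℝ) : (vecMulVec v v).PosSemidef := by
  refine PosSemidef.of_dotProduct_mulVec_nonneg ?_ fun y => ?_
  · ext i j
    simp [Matrix.conjTranspose_apply, vecMulVec_apply, mul_comm]
  · have hs : star y = y := by ext i; simp
    have key : y ⬝ᵥ (vecMulVec v v *ᵥ y) = (v ⬝ᵥ y) * (v ⬝ᵥ y) := by
      simp only [dotProduct, mulVec, vecMulVec_apply, Finset.mul_sum, Finset.sum_mul]
      rw [Finset.sum_comm]
      exact Finset.sum_congr rfl fun i _ => Finset.sum_congr rfl fun j _ => by ring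
    rw [hs, key]
    exact mul_self_nonneg _

lemma psd_sum {d : ℕ} {ι : Type*} (s : Finset ι) (f : ι → Matrix (Fin d) (Fin d) ℝ)
    (h : ∀ i ∈ s, (f i).PosSemidef) : (∑ i ∈ s, f i).PosSemidef := by
  classical
  induction s using Finset.induction with
  | empty => simpa using Matrix.PosSemidef.zero
  | insert a s hx ih =>
    rw [Finset.sum_insert hx]
    exact (h _ (Finset.mem_insert_self _ _)).add
      (ih fun i hi => h i (Finset.mem_insert_of_mem hi))

theorem elliptical_potential_no_clipping
    {d : ℕ} (T : ℕ) (L : ℝ) (x : Fin T → Fin d → ℝ)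
    (hx : ∀ i, Real.sqrt (x i ⬝ᵥ x i) ≤ L)
    (Lam0 : Matrix (Fin d) (Fin d) ℝ) (hLam0 : Lam0.PosDef)
    (hmin : (Lam0 - max 1 (L ^ 2) • (1 : Matrix (Fin d) (Fin d) ℝ)).PosSemidef)
    (Lam : ℕ → Matrix (Fin d) (Fin d) ℝ)
    (hLam : ∀ t, Lam t = Lam0 +
      ∑ i ∈ Finset.univ.filter (fun i : Fin T => (i : ℕ) < t), vecMulVec (x i) (x i)) :
    ∑ i : Fin T, x i ⬝ᵥ (Lam (i : ℕ))⁻¹.mulVec (x i)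
      ≤ 2 * Real.log ((Lam T).det / Lam0.det) := by
  classical
  set c : ℝ := max 1 (L ^ 2) with hc
  have hc1 : (1:ℝ) ≤ c := le_max_left _ _
  have hcL : L ^ 2 ≤ c := le_max_right _ _
  have hsum : ∀ t, (∑ i ∈ Finset.univ.filter (fun i : Fin T => (i : ℕ) < t),
      vecMulVec (x i) (x i)).PosSemidef :=
    fun t => psd_sum _ _ (fun i _ => vecMulVec_psd _)
  have hPD : ∀ t, (Lam t).PosDef := by
    intro t; rw [hLam t]; exact hLam0.add_posSemidef (hsum t)
  have hlow : ∀ t, ((Lam t) - c • 1).PosSemidef := by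
    intro t
    have heq : Lam t - c • (1 : Matrix (Fin d) (Fin d) ℝ)
        = (Lam0 - c • (1 : Matrix (Fin d) (Fin d) ℝ)) +
          ∑ i ∈ Finset.univ.filter (fun i : Fin T => (i : ℕ) < t), vecMulVec (x i) (x i) := by
      rw [hLam t]; abel
    rw [heq]
    exact hmin.add (hsum t)
  have hq0 : ∀ i : Fin T, 0 ≤ x i ⬝ᵥ (Lam (i : ℕ))⁻¹ *ᵥ x i := by
    intro i
    have h := ((hPD (i : ℕ)).inv.posSemidef).dotProduct_mulVec_nonneg (x i)
    have hs : star (x i) = x i := by ext j; simp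
    rwa [hs] at h
  have hq1 : ∀ i : Fin T, x i ⬝ᵥ (Lam (i : ℕ))⁻¹ *ᵥ x i ≤ 1 := by
    intro i
    set A := Lam (i : ℕ) with hA
    set y := A⁻¹ *ᵥ x i with hy
    have hxx0 : 0 ≤ x i ⬝ᵥ x i := Finset.sum_nonneg fun j _ => mul_self_nonneg _
    have hL0 : 0 ≤ L := le_trans (Real.sqrt_nonneg _) (hx i)
    have hxxL : x i ⬝ᵥ x i ≤ L ^ 2 := by
      nlinarith [Real.sq_sqrt hxx0, Real.sqrt_nonneg (x i ⬝ᵥ x i), hx i]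
    have hu : IsUnit A.det := isUnit_iff_ne_zero.2 (hPD (i : ℕ)).det_pos.ne'
    have hAy : A *ᵥ y = x i := by
      rw [hy, mulVec_mulVec, Matrix.mul_nonsing_inv _ hu, one_mulVec]
    have hquad : c * (y ⬝ᵥ y) ≤ y ⬝ᵥ (A *ᵥ y) := by
      have h := (hlow (i : ℕ)).dotProduct_mulVec_nonneg y
      have hs : star y = y := by ext j; simp
      rw [hs, sub_mulVec, smul_mulVec, one_mulVec, dotProduct_sub,
        dotProduct_smul] at h
      simp only [smul_eq_mul] at h
      linarith
    have hCS : (x i ⬝ᵥ y) ^ 2 ≤ (x i ⬝ᵥ x i) * (y ⬝ᵥ y) := by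
      have h := Finset.sum_mul_sq_le_sq_mul_sq Finset.univ (x i) y
      simpa [dotProduct, sq] using h
    have hyy0 : 0 ≤ y ⬝ᵥ y := Finset.sum_nonneg fun j _ => mul_self_nonneg _
    have hq0' : 0 ≤ x i ⬝ᵥ y := hq0 i
    have hcomm : y ⬝ᵥ x i = x i ⬝ᵥ y := dotProduct_comm _ _
    rw [hAy, hcomm] at hquad
    show x i ⬝ᵥ y ≤ 1
    nlinarith [hquad, hCS, hxxL, hcL, hyy0, hq0', hc1]
  have hdet : ∀ i : Fin T, (Lam ((i : ℕ) + 1)).det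
      = (Lam (i : ℕ)).det * (1 + x i ⬝ᵥ (Lam (i : ℕ))⁻¹ *ᵥ x i) := by
    intro i
    have hfilter : Finset.univ.filter (fun j : Fin T => (j : ℕ) < (i : ℕ) + 1)
        = insert i (Finset.univ.filter (fun j : Fin T => (j : ℕ) < (i : ℕ))) := by
      ext j
      simp [Nat.lt_succ_iff_lt_or_eq, Fin.ext_iff, or_comm, le_iff_eq_or_lt]
    have hsplit : Lam ((i : ℕ) + 1) = Lam (i : ℕ) + vecMulVec (x i) (x i) := by
      rw [hLam, hLam, hfilter, Finset.sum_insert (by simp)]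
      abel
    have hu : IsUnit (Lam (i : ℕ)).det := isUnit_iff_ne_zero.2 (hPD (i : ℕ)).det_pos.ne'
    rw [hsplit, vecMulVec_eq Unit, det_add_replicateCol_mul_replicateRow hu (x i) (x i)]
    congr 1
    rw [Matrix.mul_assoc, ← replicateCol_mulVec, det_unique]
    simp [Matrix.add_apply, Matrix.one_apply, replicateRow_mul_replicateCol_apply]
  have hdetpos : ∀ t, 0 < (Lam t).det := fun t => (hPD t).det_pos
  have hlog : ∀ i : Fin T, x i ⬝ᵥ (Lam (i : ℕ))⁻¹ *ᵥ x i
      ≤ 2 * (Real.log (Lam ((i : ℕ) + 1)).det - Real.log (Lam (i : ℕ)).det) := by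
    intro i
    have h1 := aux_log_ineq _ (hq0 i) (hq1 i)
    have hpos : (0:ℝ) < 1 + x i ⬝ᵥ (Lam (i : ℕ))⁻¹ *ᵥ x i := by
      have := hq0 i; linarith
    have h2 : Real.log (Lam ((i : ℕ) + 1)).det
        = Real.log (Lam (i : ℕ)).det + Real.log (1 + x i ⬝ᵥ (Lam (i : ℕ))⁻¹ *ᵥ x i) := by
      rw [hdet i, Real.log_mul (hdetpos _).ne' hpos.ne']
    linarith
  have hLam00 : Lam 0 = Lam0 := by
    rw [hLam]; simp
  calc ∑ i : Fin T, x i ⬝ᵥ (Lam (i : ℕ))⁻¹ *ᵥ x i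
      ≤ ∑ i : Fin T, 2 * (Real.log (Lam ((i : ℕ) + 1)).det - Real.log (Lam (i : ℕ)).det) :=
        Finset.sum_le_sum fun i _ => hlog i
    _ = 2 * (Real.log (Lam T).det - Real.log (Lam 0).det) := by
        rw [← Finset.mul_sum]
        congr 1
        rw [Fin.sum_univ_eq_sum_range
          (fun t => Real.log (Lam (t + 1)).det - Real.log (Lam t).det) T]
        exact Finset.sum_range_sub (fun t => Real.log (Lam t).det) T
    _ = 2 * Real.log ((Lam T).det / Lam0.det) := by
        rw [hLam00, Real.log_div (hdetpos T).ne' hLam0.det_pos.ne']
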